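/- Suppose gcd(d − g + 1, 2g − 2) = 1 with g ≥ 2. Then there is no pair of positive integers (w_Z, k_Z) with w_Z + w_{Z'} = 2g − 2, w_Z, w_{Z'} ≥ 1, w_Z ≡ k_Z (mod 2), such that d·w_Z/(2g−2) − k_Z/2 is an integer. Equivalently: if d·w_Z/(2g−2) = n/2 with n ∈ ℤ and n ≡ k_Z (mod 2), and 1 ≤ w_Z ≤ 2g − 3, then gcd(d − g + 1, 2g − 2) > 1. -/

import Mathlib

/-- Suppose `g ≥ 2` and `gcd(d - g + 1, 2g - 2) = 1`. Then there is no
pair of integers `(w_Z, k_Z)` with `1 ≤ w_Z ≤ 2g - 3` (so that both `w_Z ≥ 1` and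
`w_{Z'} = 2g - 2 - w_Z ≥ 1`) and `w_Z ≡ k_Z (mod 2)` such that
`m_Z(d) = d·w_Z/(2g-2) - k_Z/2` is an integer. -/
theorem no_integral_basic_inequality_extreme_of_coprime
    (g d : ℤ) (hg : 2 ≤ g)
    (hcop : Int.gcd (d - g + 1) (2 * g - 2) = 1) :
    ¬ ∃ w k : ℤ, 1 ≤ w ∧ w ≤ 2 * g - 3 ∧ (2 : ℤ) ∣ (w - k) ∧
        ∃ n : ℤ, (d : ℚ) * (w : ℚ) / (2 * (g : ℚ) - 2) - (k : ℚ) / 2 = (n : ℚ) := by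
  rintro ⟨w, k, hw1, hw2, ⟨m, hm⟩, n, hn⟩
  have hne : (2 * (g : ℚ) - 2) ≠ 0 := by
    have : (2 : ℚ) ≤ (g : ℚ) := by exact_mod_cast hg
    nlinarith
  -- clear denominators: 2*d*w - k*(2g-2) = 2n*(2g-2)
  have key : (2 : ℚ) * d * w - k * (2 * g - 2) = 2 * n * (2 * g - 2) := by
    field_simp at hn
    have hg1 : (g : ℚ) - 1 ≠ 0 := fun h => hne (by linarith)
    have h3 : (d : ℚ) * w = (2 * n + k) * (g - 1) := by
      rw [← div_eq_iff hg1]; linarith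
    linear_combination 2 * h3
  have keyZ : 2 * d * w - k * (2 * g - 2) = 2 * n * (2 * g - 2) := by
    exact_mod_cast key
  -- (d - g + 1) * w = (2g - 2) * (n - m) using w - k = 2m
  have h2 : 2 * ((d - g + 1) * w) = 2 * ((2 * g - 2) * (n - m)) := by
    linear_combination keyZ - (2 * g - 2) * hm
  have hdvd : (2 * g - 2) ∣ (d - g + 1) * w :=
    ⟨n - m, mul_left_cancel₀ two_ne_zero h2⟩
  have hcop' : IsCoprime (2 * g - 2) (d - g + 1) :=
    (Int.isCoprime_iff_gcd_eq_one.mpr (by rwa [Int.gcd_comm]))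
  have hdvdw : (2 * g - 2) ∣ w := hcop'.dvd_of_dvd_mul_left hdvd
  have := Int.le_of_dvd (by linarith) hdvdw
  linarith
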